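/- arXiv:1703.08154 — 5 statements merged into one kernel-verified Lean document; each statement's English description precedes it below -/
import Mathlib

section
/- Let s be a complex number with Re s ≥ 0 and let v ∈ C³([0,1], ℂ) satisfy s v + v''' = 0 on [0,1] together with the boundary conditions v(0) = 0, v(1) = 0, v'(1) = 0. Then v ≡ 0 on [0,1]. -/
open Complex Set

private lemma re_mul_conj_symm (z w : ℂ) :
    (z * (starRingEnd ℂ) w).re = (w * (starRingEnd ℂ) z).re := by
  simp [Complex.mul_re]; ring

private lemma hasDerivAt_re_mul_conj {f h : ℝ → ℂ} {f' h' : ℂ} {x : ℝ}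
    (hf : HasDerivAt f f' x) (hh : HasDerivAt h h' x) :
    HasDerivAt (fun x => (f x * (starRingEnd ℂ) (h x)).re)
      (f' * (starRingEnd ℂ) (h x) + f x * (starRingEnd ℂ) h').re x := by
  have hc : HasDerivAt (fun x => (starRingEnd ℂ) (h x)) ((starRingEnd ℂ) h') x := hh.star
  have hm := hf.mul hc
  exact Complex.reCLM.hasFDerivAt.comp_hasDerivAt x hm

/-- Uniqueness for the Laplace-transformed linear KdV BVP: if Re s ≥ 0,
s v + v''' = 0 on [0,1], v(0) = v(1) = v'(1) = 0, then v ≡ 0 on [0,1]. -/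
theorem stmt2 (s : ℂ) (hs : 0 ≤ s.re) (v : ℝ → ℂ) (hv : ContDiff ℝ 3 v)
    (hode : ∀ x ∈ Set.Icc (0 : ℝ) 1, s * v x + iteratedDeriv 3 v x = 0)
    (hb0 : v 0 = 0) (hb1 : v 1 = 0) (hb2 : deriv v 1 = 0) :
    ∀ x ∈ Set.Icc (0 : ℝ) 1, v x = 0 := by
  set v1 := deriv v with hv1def
  set v2 := deriv v1 with hv2def
  set v3 := deriv v2 with hv3def
  -- regularity
  have h3 : ContDiff ℝ ((2 : ℕ) + 1) v := by exact_mod_cast hv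
  have dv : Differentiable ℝ v := (contDiff_succ_iff_deriv.mp h3).1
  have h2 : ContDiff ℝ ((1 : ℕ) + 1) v1 := by
    exact_mod_cast (contDiff_succ_iff_deriv.mp h3).2.2
  have dv1 : Differentiable ℝ v1 := (contDiff_succ_iff_deriv.mp h2).1
  have h1 : ContDiff ℝ ((0 : ℕ) + 1) v2 := by
    exact_mod_cast (contDiff_succ_iff_deriv.mp h2).2.2
  have dv2 : Differentiable ℝ v2 := (contDiff_succ_iff_deriv.mp h1).1
  have hiter : iteratedDeriv 3 v = v3 := by
    rw [show (3 : ℕ) = 2 + 1 from rfl, iteratedDeriv_succ,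
      show (2 : ℕ) = 1 + 1 from rfl, iteratedDeriv_succ, iteratedDeriv_one]
  -- the multiplier function
  set g : ℝ → ℝ := fun x =>
    2 * x * (v2 x * (starRingEnd ℂ) (v x)).re
      - 2 * (v1 x * (starRingEnd ℂ) (v x)).re
      - x * (v1 x * (starRingEnd ℂ) (v1 x)).re with hgdef
  have hg : ∀ x : ℝ, HasDerivAt g
      (2 * x * (v3 x * (starRingEnd ℂ) (v x)).re
        - 3 * (v1 x * (starRingEnd ℂ) (v1 x)).re) x := by
    intro x
    have hA := hasDerivAt_re_mul_conj ((dv2 x).hasDerivAt) ((dv x).hasDerivAt)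
    have hB := hasDerivAt_re_mul_conj ((dv1 x).hasDerivAt) ((dv x).hasDerivAt)
    have hC := hasDerivAt_re_mul_conj ((dv1 x).hasDerivAt) ((dv1 x).hasDerivAt)
    have hx : HasDerivAt (fun y : ℝ => y) 1 x := hasDerivAt_id x
    have h1' := ((hx.mul hA).const_mul (2:ℝ))
    have h2' := hB.const_mul (2:ℝ)
    have h3' := hx.mul hC
    have htot := (h1'.sub h2').sub h3'
    have hfun : g = fun y =>
        2 * (y * (v2 y * (starRingEnd ℂ) (v y)).re)
          - 2 * (v1 y * (starRingEnd ℂ) (v y)).re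
          - y * (v1 y * (starRingEnd ℂ) (v1 y)).re := by
      funext y; rw [hgdef]; ring
    rw [hfun]
    convert htot using 1
    case e'_4 => rfl
    case e'_5 => rfl
    case e'_8 => rfl
    rw [hv3def, hv2def, hv1def]
    simp only [Complex.add_re, Complex.mul_re, Complex.mul_im, Complex.conj_re,
      Complex.conj_im]
    ring
  -- derivative on [0,1]
  have hg' : ∀ x ∈ Icc (0:ℝ) 1, HasDerivAt g
      (-(2 * x * s.re * Complex.normSq (v x)) - 3 * Complex.normSq (v1 x)) x := by
    intro x hx
    have hode' : v3 x = -(s * v x) := by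
      have := hode x hx
      rw [hiter] at this
      linear_combination this
    have := hg x
    rw [hode'] at this
    convert this using 1
    simp only [Complex.mul_re, Complex.mul_im, Complex.normSq_apply, Complex.conj_re,
      Complex.conj_im, Complex.neg_re, Complex.neg_im]
    ring
  -- g is antitone on [0,1]
  have hcont : ContinuousOn g (Icc 0 1) := by
    have : Differentiable ℝ g := fun x => (hg x).differentiableAt
    exact this.continuous.continuousOn
  have hanti : AntitoneOn g (Icc 0 1) := by
    apply antitoneOn_of_deriv_nonpos (convex_Icc 0 1) hcont
    · intro x hx
      exact ((hg x).differentiableAt).differentiableWithinAt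
    · intro x hx
      rw [interior_Icc] at hx
      rw [(hg' x (Ioo_subset_Icc_self hx)).deriv]
      have h1 : 0 ≤ 2 * x * s.re * Complex.normSq (v x) :=
        mul_nonneg (mul_nonneg (mul_nonneg (by norm_num) hx.1.le) hs)
          (Complex.normSq_nonneg (v x))
      nlinarith [Complex.normSq_nonneg (v1 x)]
  have hg0 : g 0 = 0 := by simp [hgdef, hb0]
  have hg1 : g 1 = 0 := by
    have hb2' : v1 1 = 0 := hb2
    simp [hgdef, hb1, hb2']
  have hgzero : ∀ x ∈ Icc (0:ℝ) 1, g x = 0 := by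
    intro x hx
    have hle := hanti (left_mem_Icc.mpr one_pos.le) hx hx.1
    have hge := hanti hx (right_mem_Icc.mpr one_pos.le) hx.2
    rw [hg0] at hle; rw [hg1] at hge; linarith
  -- hence v1 = 0 on (0,1)
  have hv1Ioo : ∀ x ∈ Ioo (0:ℝ) 1, v1 x = 0 := by
    intro x hx
    have hev : g =ᶠ[nhds x] (fun _ => (0:ℝ)) := by
      filter_upwards [Ioo_mem_nhds hx.1 hx.2] with y hy
      exact hgzero y (Ioo_subset_Icc_self hy)
    have hzero : HasDerivAt g 0 x :=
      (hasDerivAt_const x (0:ℝ)).congr_of_eventuallyEq hev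
    have huniq := (hg' x (Ioo_subset_Icc_self hx)).unique hzero
    have hnsq : Complex.normSq (v1 x) = 0 := by
      have h1 : 0 ≤ 2 * x * s.re * Complex.normSq (v x) :=
        mul_nonneg (mul_nonneg (mul_nonneg (by norm_num) hx.1.le) hs)
          (Complex.normSq_nonneg (v x))
      nlinarith [Complex.normSq_nonneg (v1 x)]
    exact Complex.normSq_eq_zero.mp hnsq
  -- v1 = 0 on [0,1] by continuity
  have hv1Icc : ∀ x ∈ Icc (0:ℝ) 1, v1 x = 0 := by
    intro x hx
    have hcl : IsClosed {y : ℝ | v1 y = 0} :=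
      isClosed_eq (dv1.continuous) continuous_const
    have hsub : Icc (0:ℝ) 1 ⊆ {y : ℝ | v1 y = 0} := by
      rw [← closure_Ioo (by norm_num : (0:ℝ) ≠ 1)]
      exact hcl.closure_subset_iff.mpr (fun y hy => hv1Ioo y hy)
    exact hsub hx
  -- conclude v = 0 on [0,1]
  intro x hx
  have hderiv : ∀ y ∈ Icc (0:ℝ) 1, HasDerivWithinAt v (v1 y) (Icc (0:ℝ) 1) y :=
    fun y _ => (dv y).hasDerivAt.hasDerivWithinAt
  have hbound : ∀ y ∈ Icc (0:ℝ) 1, ‖v1 y‖ ≤ 0 := by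
    intro y hy; rw [hv1Icc y hy]; simp
  have := Convex.norm_image_sub_le_of_norm_hasDerivWithin_le hderiv hbound
    (convex_Icc 0 1) (left_mem_Icc.mpr one_pos.le) hx
  rw [hb0, sub_zero, zero_mul] at this
  exact norm_le_zero_iff.mp this
end

section
/- Let s be a complex number with Re s ≥ 0 and let v ∈ C³([0,1], ℂ) satisfy s v + v + v''' = 0 on [0,1] together with the boundary conditions v''(0) = 0, v'(1) = 0, v''(1) = 0. Then v ≡ 0 on [0,1]. -/
open MeasureTheory intervalIntegral Set


/-- Uniqueness for the Laplace-transformed linear KdV BVP with δ₄ = 1: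
if Re s ≥ 0, s v + v + v''' = 0 on [0,1], v''(0) = v'(1) = v''(1) = 0,
then v ≡ 0 on [0,1]. -/
theorem stmt3 (s : ℂ) (hs : 0 ≤ s.re) (v : ℝ → ℂ) (hv : ContDiff ℝ 3 v)
    (hode : ∀ x ∈ Set.Icc (0 : ℝ) 1, s * v x + v x + iteratedDeriv 3 v x = 0)
    (hb0 : iteratedDeriv 2 v 0 = 0) (hb1 : deriv v 1 = 0)
    (hb2 : iteratedDeriv 2 v 1 = 0) :
    ∀ x ∈ Set.Icc (0 : ℝ) 1, v x = 0 := by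
  -- notation
  set d1 : ℝ → ℂ := deriv v with hd1def
  set d2 : ℝ → ℂ := iteratedDeriv 2 v with hd2def
  set d3 : ℝ → ℂ := iteratedDeriv 3 v with hd3def
  have hc0 : Continuous v := hv.continuous
  have hc1 : Continuous d1 := by
    have := hv.continuous_iteratedDeriv 1 (by norm_num)
    simpa [iteratedDeriv_one] using this
  have hc2 : Continuous d2 := hv.continuous_iteratedDeriv 2 (by norm_num)
  have hc3 : Continuous d3 := hv.continuous_iteratedDeriv 3 (by norm_num)
  have hD0 : ∀ x, HasDerivAt v (d1 x) x := fun x =>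
    ((hv.differentiable (by norm_num)) x).hasDerivAt
  have hD1 : ∀ x, HasDerivAt d1 (d2 x) x := by
    intro x
    have hdiff : Differentiable ℝ (iteratedDeriv 1 v) :=
      hv.differentiable_iteratedDeriv 1 (by norm_num)
    have h := (hdiff x).hasDerivAt
    rw [iteratedDeriv_one] at hdiff h
    have : deriv d1 x = d2 x := by
      rw [hd1def, hd2def, iteratedDeriv_succ, iteratedDeriv_one]
    rwa [this] at h
  have hD2 : ∀ x, HasDerivAt d2 (d3 x) x := by
    intro x
    have hdiff : Differentiable ℝ (iteratedDeriv 2 v) :=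
      hv.differentiable_iteratedDeriv 2 (by norm_num)
    have h := (hdiff x).hasDerivAt
    have h23 : deriv d2 = d3 := by
      rw [hd2def, hd3def]
      exact (iteratedDeriv_succ (n := 2)).symm
    rwa [h23] at h
  -- the energy function
  set G : ℝ → ℂ := fun x => (starRingEnd ℂ) (v x) * d2 x - (starRingEnd ℂ) (d1 x) * d1 x / 2
    with hGdef
  set g : ℝ → ℂ := fun x => ((starRingEnd ℂ) (d1 x) * d2 x + (starRingEnd ℂ) (v x) * d3 x)
      - ((starRingEnd ℂ) (d2 x) * d1 x + (starRingEnd ℂ) (d1 x) * d2 x) / 2 with hgdef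
  have hG : ∀ x, HasDerivAt G (g x) x := by
    intro x
    have h0s : HasDerivAt (fun y => (starRingEnd ℂ) (v y)) ((starRingEnd ℂ) (d1 x)) x := by
      simpa using (hD0 x).star
    have h1s : HasDerivAt (fun y => (starRingEnd ℂ) (d1 y)) ((starRingEnd ℂ) (d2 x)) x := by
      simpa using (hD1 x).star
    have hA : HasDerivAt (fun y => (starRingEnd ℂ) (v y) * d2 y)
        ((starRingEnd ℂ) (d1 x) * d2 x + (starRingEnd ℂ) (v x) * d3 x) x := h0s.mul (hD2 x)
    have hB : HasDerivAt (fun y => (starRingEnd ℂ) (d1 y) * d1 y / 2)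
        (((starRingEnd ℂ) (d2 x) * d1 x + (starRingEnd ℂ) (d1 x) * d2 x) / 2) x :=
      (h1s.mul (hD1 x)).div_const 2
    exact hA.sub hB
  -- real-part energy
  have hE : ∀ x, HasDerivAt (fun y => (G y).re) ((g x).re) x := fun x =>
    (Complex.reCLM.hasFDerivAt.comp_hasDerivAt x (hG x))
  have hgc : Continuous fun x => (g x).re := by fun_prop
  have hFTC : ∫ x in (0:ℝ)..1, (g x).re = (G 1).re - (G 0).re :=
    integral_eq_sub_of_hasDerivAt (fun x _ => hE x) (hgc.intervalIntegrable 0 1)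
  -- real part of g
  have hgre : ∀ x, (g x).re = ((starRingEnd ℂ) (v x) * d3 x).re := by
    intro x
    have : ((starRingEnd ℂ) (d2 x) * d1 x).re = ((starRingEnd ℂ) (d1 x) * d2 x).re := by
      simp [Complex.mul_re]; ring
    simp [hgdef, this]
  -- on the interval, g.re = -(s.re+1) * normSq (v x)
  have hgre' : ∀ x ∈ Set.Icc (0:ℝ) 1, (g x).re = -((s.re + 1) * Complex.normSq (v x)) := by
    intro x hx
    have h3 : d3 x = -((s + 1) * v x) := by
      have := hode x hx
      rw [hd3def]
      linear_combination this
    rw [hgre x, h3]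
    have hms : (starRingEnd ℂ) (v x) * -((s + 1) * v x)
        = -((s+1) * (Complex.normSq (v x) : ℂ)) := by
      linear_combination (-(s+1)) * Complex.mul_conj (v x)
    rw [hms]
    simp [Complex.mul_re]
  have hint : ∫ x in (0:ℝ)..1, (g x).re
      = ∫ x in (0:ℝ)..1, -((s.re + 1) * Complex.normSq (v x)) := by
    apply intervalIntegral.integral_congr
    intro x hx
    exact hgre' x (by rwa [Set.uIcc_of_le (by norm_num : (0:ℝ) ≤ 1)] at hx)
  -- boundary values
  have hG1 : G 1 = 0 := by simp [hGdef, hb1, hb2]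
  have hG0 : (G 0).re = -(Complex.normSq (d1 0) / 2) := by
    simp [hGdef, hb0, Complex.div_re, Complex.mul_re, Complex.normSq_apply]
  -- conclude integral of normSq is 0
  have hI : ∫ x in (0:ℝ)..1, Complex.normSq (v x) = 0 := by
    have h1 : -((s.re + 1) * ∫ x in (0:ℝ)..1, Complex.normSq (v x))
        = Complex.normSq (d1 0) / 2 := by
      have := hFTC
      rw [hint, hG1] at this
      rw [← intervalIntegral.integral_const_mul, ← intervalIntegral.integral_neg]
      rw [this, hG0]
      simp
    have hpos : 0 < s.re + 1 := by linarith
    have hnn : 0 ≤ ∫ x in (0:ℝ)..1, Complex.normSq (v x) :=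
      intervalIntegral.integral_nonneg (by norm_num) (fun x _ => Complex.normSq_nonneg _)
    nlinarith [Complex.normSq_nonneg (d1 0)]
  -- from zero integral to pointwise zero
  have hae : (fun x => Complex.normSq (v x)) =ᵐ[volume.restrict (Ioc (0:ℝ) 1)] 0 := by
    have := (intervalIntegral.integral_eq_zero_iff_of_le_of_nonneg_ae (by norm_num : (0:ℝ) ≤ 1)
      (Filter.Eventually.of_forall fun x => Complex.normSq_nonneg _)
      (((Complex.continuous_normSq.comp hc0)).intervalIntegrable 0 1)).mp hI
    exact this
  have haeIcc : (fun x => Complex.normSq (v x)) =ᵐ[volume.restrict (Icc (0:ℝ) 1)] 0 := by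
    rwa [Measure.restrict_congr_set Ioc_ae_eq_Icc] at hae
  have heq : Set.EqOn (fun x => Complex.normSq (v x)) 0 (Icc (0:ℝ) 1) :=
    Measure.eqOn_Icc_of_ae_eq volume (by norm_num) haeIcc
      ((Complex.continuous_normSq.comp hc0)).continuousOn continuousOn_const
  intro x hx
  have := heq hx
  simpa using Complex.normSq_eq_zero.mp (by simpa using this)
end

section
/- For ρ > 0 and λ₁(ρ) = iρ, λ₂(ρ) = ((√3 - i)/2)ρ, λ₃(ρ) = -((√3 + i)/2)ρ, the quantity Δ¹(ρ) := (λ₃-λ₂)e^{-λ₁} + (λ₁-λ₃)e^{-λ₂} + (λ₂-λ₁)e^{-λ₃} satisfies |Δ¹(ρ)| / (ρ e^{(√3/2)ρ}) → √3 as ρ → +∞. -/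
noncomputable def lam1 (ρ : ℝ) : ℂ := Complex.I * ρ
noncomputable def lam2 (ρ : ℝ) : ℂ := ((Real.sqrt 3 : ℂ) - Complex.I) / 2 * ρ
noncomputable def lam3 (ρ : ℝ) : ℂ := -(((Real.sqrt 3 : ℂ) + Complex.I) / 2 * ρ)

noncomputable def Delta1 (ρ : ℝ) : ℂ :=
  (lam3 ρ - lam2 ρ) * Complex.exp (-lam1 ρ) +
  (lam1 ρ - lam3 ρ) * Complex.exp (-lam2 ρ) +
  (lam2 ρ - lam1 ρ) * Complex.exp (-lam3 ρ)

noncomputable def Aterm (ρ : ℝ) : ℂ :=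
  (-(Real.sqrt 3 : ℂ)) * Complex.exp ((-Complex.I - (Real.sqrt 3 : ℂ)/2) * ρ)
  + ((Real.sqrt 3 : ℂ) + 3*Complex.I)/2 * Complex.exp ((-(Real.sqrt 3:ℂ) + Complex.I/2) * ρ)
  + ((Real.sqrt 3 : ℂ) - 3*Complex.I)/2 * Complex.exp (Complex.I/2 * ρ)

lemma delta_eq (ρ : ℝ) :
    Delta1 ρ = ((ρ * Real.exp (Real.sqrt 3 / 2 * ρ) : ℝ) : ℂ) * Aterm ρ := by
  have h1 : Complex.exp ((Real.sqrt 3 : ℂ) / 2 * ρ) *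
      Complex.exp ((-Complex.I - (Real.sqrt 3 : ℂ)/2) * ρ) =
      Complex.exp (-(Complex.I * ρ)) := by
    rw [← Complex.exp_add]; congr 1; ring
  have h2 : Complex.exp ((Real.sqrt 3 : ℂ) / 2 * ρ) *
      Complex.exp ((-(Real.sqrt 3:ℂ) + Complex.I/2) * ρ) =
      Complex.exp (-(((Real.sqrt 3 : ℂ) - Complex.I) / 2 * ρ)) := by
    rw [← Complex.exp_add]; congr 1; ring
  have h3 : Complex.exp ((Real.sqrt 3 : ℂ) / 2 * ρ) *
      Complex.exp (Complex.I/2 * ρ) =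
      Complex.exp (- -(((Real.sqrt 3 : ℂ) + Complex.I) / 2 * ρ)) := by
    rw [← Complex.exp_add]; congr 1; ring
  unfold Delta1 Aterm lam1 lam2 lam3
  push_cast [Complex.ofReal_exp]
  linear_combination ((ρ:ℂ) * (Real.sqrt 3 : ℂ)) * h1 -
    ((ρ:ℂ) * (((Real.sqrt 3 : ℂ) + 3*Complex.I)/2)) * h2 -
    ((ρ:ℂ) * (((Real.sqrt 3 : ℂ) - 3*Complex.I)/2)) * h3

open Filter

lemma abs_of_sq3 (a : ℂ) (h : a.re ^ 2 + a.im ^ 2 = 3) : ‖a‖ = Real.sqrt 3 := by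
  rw [Complex.norm_def, Complex.normSq_apply]
  congr 1
  nlinarith [h]

lemma sqrt3_sq : Real.sqrt 3 * Real.sqrt 3 = 3 := Real.mul_self_sqrt (by norm_num)

lemma abs_c2 : ‖((Real.sqrt 3 : ℂ) + 3*Complex.I)/2‖ = Real.sqrt 3 := by
  apply abs_of_sq3
  simp [Complex.div_re, Complex.div_im, Complex.normSq_apply]
  nlinarith [sqrt3_sq]

lemma abs_c3 : ‖((Real.sqrt 3 : ℂ) - 3*Complex.I)/2‖ = Real.sqrt 3 := by
  apply abs_of_sq3
  simp [Complex.div_re, Complex.div_im, Complex.normSq_apply]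
  nlinarith [sqrt3_sq]

lemma aterm_bound (ρ : ℝ) : |‖Aterm ρ‖ - Real.sqrt 3| ≤
    Real.sqrt 3 * Real.exp (-(Real.sqrt 3)/2 * ρ) + Real.sqrt 3 * Real.exp (-(Real.sqrt 3) * ρ) := by
  set t1 : ℂ := (-(Real.sqrt 3 : ℂ)) * Complex.exp ((-Complex.I - (Real.sqrt 3 : ℂ)/2) * ρ) with ht1
  set t2 : ℂ := ((Real.sqrt 3 : ℂ) + 3*Complex.I)/2 * Complex.exp ((-(Real.sqrt 3:ℂ) + Complex.I/2) * ρ) with ht2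
  set t3 : ℂ := ((Real.sqrt 3 : ℂ) - 3*Complex.I)/2 * Complex.exp (Complex.I/2 * ρ) with ht3
  have habs3 : ‖t3‖ = Real.sqrt 3 := by
    rw [ht3, norm_mul, abs_c3, Complex.norm_exp]
    simp
  have h1 : ‖t1‖ = Real.sqrt 3 * Real.exp (-(Real.sqrt 3)/2 * ρ) := by
    rw [ht1, norm_mul, norm_neg, Complex.norm_real, Real.norm_eq_abs, Complex.norm_exp,
      abs_of_nonneg (Real.sqrt_nonneg 3)]
    congr 2
    simp [Complex.mul_re]
    ring
  have h2 : ‖t2‖ = Real.sqrt 3 * Real.exp (-(Real.sqrt 3) * ρ) := by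
    rw [ht2, norm_mul, abs_c2, Complex.norm_exp]
    congr 2
    simp [Complex.mul_re]
  have key : |‖Aterm ρ‖ - ‖t3‖| ≤ ‖t1 + t2‖ := by
    have := abs_norm_sub_norm_le (Aterm ρ) t3
    have hA : Aterm ρ - t3 = t1 + t2 := by rw [ht1, ht2, ht3]; unfold Aterm; ring
    rwa [hA] at this
  rw [habs3] at key
  calc |‖Aterm ρ‖ - Real.sqrt 3| ≤ ‖t1 + t2‖ := key
    _ ≤ ‖t1‖ + ‖t2‖ := norm_add_le _ _
    _ = _ := by rw [h1, h2]

lemma aterm_tendsto :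
    Tendsto (fun ρ : ℝ => ‖Aterm ρ‖) atTop (nhds (Real.sqrt 3)) := by
  rw [tendsto_iff_dist_tendsto_zero]
  have hb : Tendsto (fun ρ : ℝ => Real.sqrt 3 * Real.exp (-(Real.sqrt 3)/2 * ρ) +
      Real.sqrt 3 * Real.exp (-(Real.sqrt 3) * ρ)) atTop (nhds 0) := by
    have h3 : (0:ℝ) < Real.sqrt 3 := Real.sqrt_pos.2 (by norm_num)
    have e1 : Tendsto (fun ρ : ℝ => Real.exp (-(Real.sqrt 3)/2 * ρ)) atTop (nhds 0) := by
      rw [Real.tendsto_exp_comp_nhds_zero]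
      exact (tendsto_const_mul_atBot_of_neg (by linarith : -(Real.sqrt 3)/2 < 0)).2 tendsto_id
    have e2 : Tendsto (fun ρ : ℝ => Real.exp (-(Real.sqrt 3) * ρ)) atTop (nhds 0) := by
      rw [Real.tendsto_exp_comp_nhds_zero]
      exact (tendsto_const_mul_atBot_of_neg (by linarith : -(Real.sqrt 3) < 0)).2 tendsto_id
    have := (e1.const_mul (Real.sqrt 3)).add (e2.const_mul (Real.sqrt 3))
    simpa using this
  apply squeeze_zero (fun ρ => dist_nonneg) (fun ρ => ?_) hb
  rw [Real.dist_eq]; exact aterm_bound ρ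

/-- |Δ¹(ρ)| / (ρ e^{(√3/2)ρ}) → √3 as ρ → +∞. -/
theorem stmt4 :
    Filter.Tendsto
      (fun ρ : ℝ => ‖Delta1 ρ‖ / (ρ * Real.exp (Real.sqrt 3 / 2 * ρ)))
      Filter.atTop (nhds (Real.sqrt 3)) := by
  apply aterm_tendsto.congr'
  filter_upwards [eventually_gt_atTop (0:ℝ)] with ρ hρ
  have hr : (0:ℝ) < ρ * Real.exp (Real.sqrt 3 / 2 * ρ) := by positivity
  rw [delta_eq, norm_mul, Complex.norm_real, Real.norm_eq_abs, abs_of_pos hr,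
    mul_comm, mul_div_assoc, div_self hr.ne', mul_one]
end

section
/- With λ₁ = iρ, λ₂ = ((√3-i)/2)ρ, λ₃ = -((√3+i)/2)ρ for ρ > 0, the ratio Δ¹₁,₁(ρ)/Δ¹(ρ) := (λ₃-λ₂)e^{-λ₁} / [(λ₃-λ₂)e^{-λ₁} + (λ₁-λ₃)e^{-λ₂} + (λ₂-λ₁)e^{-λ₃}] satisfies: there exist constants C > 0 and ρ₀ > 0 such that |Δ¹₁,₁(ρ)/Δ¹(ρ)| ≤ C e^{-(√3/2)ρ} for all ρ ≥ ρ₀. -/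
/-- The ratio Δ¹₁,₁(ρ)/Δ¹(ρ) decays like e^{-(√3/2)ρ} as ρ → ∞. -/
theorem stmt5 :
    ∃ C > (0 : ℝ), ∃ ρ₀ > (0 : ℝ), ∀ ρ ≥ ρ₀,
      ‖(lam3 ρ - lam2 ρ) * Complex.exp (-lam1 ρ) / Delta1 ρ‖
        ≤ C * Real.exp (-(Real.sqrt 3 / 2) * ρ) := by
  refine ⟨2, by norm_num, 4, by norm_num, fun ρ hρ => ?_⟩
  have hρ0 : (0:ℝ) < ρ := lt_of_lt_of_le (by norm_num) hρ
  set s := Real.sqrt 3 with hs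
  have hsnn : 0 ≤ s := Real.sqrt_nonneg 3
  have hs2 : s ^ 2 = 3 := Real.sq_sqrt (by norm_num)
  have hs1 : (3:ℝ)/2 ≤ s := by nlinarith
  -- decompositions into a + b*I form
  have d1 : lam3 ρ - lam2 ρ = ((-(s*ρ) : ℝ) : ℂ) := by
    simp only [lam2, lam3, hs]; push_cast; ring
  have d2 : lam1 ρ - lam3 ρ = ((s/2*ρ : ℝ) : ℂ) + ((3/2*ρ : ℝ) : ℂ) * Complex.I := by
    simp only [lam1, lam2, lam3, hs]; push_cast; ring
  have d3 : lam2 ρ - lam1 ρ = ((s/2*ρ : ℝ) : ℂ) + ((-(3/2*ρ) : ℝ) : ℂ) * Complex.I := by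
    simp only [lam1, lam2, lam3, hs]; push_cast; ring
  have sq3 : Real.sqrt (3 * ρ ^ 2) = s * ρ := by
    rw [show (3:ℝ) * ρ ^ 2 = (s*ρ)^2 by nlinarith]
    exact Real.sqrt_sq (by positivity)
  have a1 : norm (lam3 ρ - lam2 ρ) = s * ρ := by
    rw [d1, Complex.norm_real, Real.norm_eq_abs, abs_neg, abs_of_nonneg (by positivity)]
  have a2 : norm (lam1 ρ - lam3 ρ) = s * ρ := by
    rw [d2, Complex.norm_add_mul_I, ← sq3]; congr 1; nlinarith
  have a3 : norm (lam2 ρ - lam1 ρ) = s * ρ := by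
    rw [d3, Complex.norm_add_mul_I, ← sq3]; congr 1; nlinarith
  have e1 : norm (Complex.exp (-lam1 ρ)) = 1 := by
    rw [Complex.norm_exp]
    simp [lam1]
  have e2 : norm (Complex.exp (-lam2 ρ)) = Real.exp (-(s/2*ρ)) := by
    rw [Complex.norm_exp]
    congr 1
    simp [lam2, hs, Complex.div_re, Complex.normSq]
  have e3 : norm (Complex.exp (-lam3 ρ)) = Real.exp (s/2*ρ) := by
    rw [Complex.norm_exp]
    congr 1
    simp [lam3, hs, Complex.div_re, Complex.normSq]
  set E := Real.exp (s/2*ρ) with hE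
  have hE4 : (4:ℝ) ≤ E := by
    have := Real.add_one_le_exp (s/2*ρ)
    nlinarith
  have hEpos : (0:ℝ) < E := Real.exp_pos _
  -- lower bound on denominator
  have hD : s * ρ * E / 2 ≤ norm (Delta1 ρ) := by
    have tri : norm ((lam2 ρ - lam1 ρ) * Complex.exp (-lam3 ρ))
        - norm ((lam3 ρ - lam2 ρ) * Complex.exp (-lam1 ρ))
        - norm ((lam1 ρ - lam3 ρ) * Complex.exp (-lam2 ρ))
        ≤ norm (Delta1 ρ) := by
      have key : norm ((lam2 ρ - lam1 ρ) * Complex.exp (-lam3 ρ)) ≤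
          norm (Delta1 ρ) +
          (norm ((lam3 ρ - lam2 ρ) * Complex.exp (-lam1 ρ)) +
           norm ((lam1 ρ - lam3 ρ) * Complex.exp (-lam2 ρ))) := by
        calc norm ((lam2 ρ - lam1 ρ) * Complex.exp (-lam3 ρ))
            = norm (Delta1 ρ + -(((lam3 ρ - lam2 ρ) * Complex.exp (-lam1 ρ)) +
              ((lam1 ρ - lam3 ρ) * Complex.exp (-lam2 ρ)))) := by congr 1; unfold Delta1; ring
          _ ≤ norm (Delta1 ρ) + norm (-(((lam3 ρ - lam2 ρ) * Complex.exp (-lam1 ρ)) +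
              ((lam1 ρ - lam3 ρ) * Complex.exp (-lam2 ρ)))) := norm_add_le _ _
          _ = norm (Delta1 ρ) + norm (((lam3 ρ - lam2 ρ) * Complex.exp (-lam1 ρ)) +
              ((lam1 ρ - lam3 ρ) * Complex.exp (-lam2 ρ))) := by rw [norm_neg]
          _ ≤ _ := by gcongr; exact norm_add_le _ _
      linarith
    rw [norm_mul, norm_mul, norm_mul, a1, a2, a3, e1, e2, e3] at tri
    have hexp : Real.exp (-(s/2*ρ)) ≤ 1 := Real.exp_le_one_iff.mpr (by nlinarith)
    have hsp : 0 < s * ρ := by positivity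
    nlinarith [mul_le_mul_of_nonneg_left hexp (le_of_lt hsp)]
  have hDpos : 0 < norm (Delta1 ρ) :=
    lt_of_lt_of_le (by positivity) hD
  rw [norm_div, norm_mul, a1, e1, mul_one]
  have step : s * ρ / norm (Delta1 ρ) ≤ s * ρ / (s * ρ * E / 2) :=
    div_le_div_of_nonneg_left (by positivity) (by positivity) hD
  have : s * ρ / (s * ρ * E / 2) = 2 * Real.exp (-(s / 2) * ρ) := by
    rw [show -(s/2) * ρ = -(s/2*ρ) by ring, Real.exp_neg, ← hE]
    field_simp
  rw [hs] at step this ⊢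
  linarith [step, le_of_eq this]
end

section
/- With λⱼ(ρ) as the roots of λ³ + iρ³ = 0 (λ₁ = iρ, λ₂ = ((√3-i)/2)ρ, λ₃ = -((√3+i)/2)ρ), the ratio Δ¹₁,₃(ρ)/Δ¹(ρ) := (e^{λ₃} - e^{λ₂}) / [(λ₃-λ₂)e^{-λ₁} + (λ₁-λ₃)e^{-λ₂} + (λ₂-λ₁)e^{-λ₃}] satisfies: there exist C > 0 and ρ₀ > 0 such that |Δ¹₁,₃(ρ)/Δ¹(ρ)| ≤ C ρ^{-1} for all ρ ≥ ρ₀. -/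
set_option maxHeartbeats 1000000 in
/-- The ratio Δ¹₁,₃(ρ)/Δ¹(ρ) decays like ρ⁻¹ as ρ → ∞. -/
theorem stmt6 :
    ∃ C > (0 : ℝ), ∃ ρ₀ > (0 : ℝ), ∀ ρ ≥ ρ₀,
      ‖(Complex.exp (lam3 ρ) - Complex.exp (lam2 ρ)) / Delta1 ρ‖
        ≤ C * ρ⁻¹ := by
  refine ⟨3, by norm_num, 4, by norm_num, fun ρ hρ => ?_⟩
  have hρ0 : (0:ℝ) < ρ := by linarith
  have hs3 : (1.5:ℝ) ≤ Real.sqrt 3 := by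
    nlinarith [Real.sq_sqrt (by norm_num : (3:ℝ) ≥ 0), Real.sqrt_nonneg 3]
  set a := Real.sqrt 3 / 2 * ρ with ha
  have ha3 : 3 ≤ a := by rw [ha]; nlinarith
  have hexp4 : (4:ℝ) ≤ Real.exp a := by
    have := Real.add_one_le_exp a; linarith
  have hexpneg : Real.exp (-a) ≤ 1 := Real.exp_le_one_iff.mpr (by linarith)
  have hexpa0 : (0:ℝ) < Real.exp a := Real.exp_pos a
  -- explicit forms
  have hl1 : lam1 ρ = ((0:ℝ):ℂ) + (ρ:ℝ) * Complex.I := by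
    simp [lam1]; ring
  have hl2 : lam2 ρ = ((Real.sqrt 3/2*ρ : ℝ):ℂ) + ((-(ρ/2):ℝ):ℂ) * Complex.I := by
    simp only [lam2]; push_cast; ring
  have hl3 : lam3 ρ = ((-(Real.sqrt 3/2*ρ) : ℝ):ℂ) + ((-(ρ/2):ℝ):ℂ) * Complex.I := by
    simp only [lam3]; push_cast; ring
  -- abs of exponentials
  have e2 : ‖Complex.exp (lam2 ρ)‖ = Real.exp a := by
    rw [Complex.norm_exp, hl2]; simp [ha]
  have e3 : ‖Complex.exp (lam3 ρ)‖ = Real.exp (-a) := by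
    rw [Complex.norm_exp, hl3]; simp [ha]
  have e1' : ‖Complex.exp (-lam1 ρ)‖ = 1 := by
    rw [Complex.norm_exp, hl1]; simp
  have e2' : ‖Complex.exp (-lam2 ρ)‖ = Real.exp (-a) := by
    rw [Complex.norm_exp, hl2]; simp [ha]
  have e3' : ‖Complex.exp (-lam3 ρ)‖ = Real.exp a := by
    rw [Complex.norm_exp, hl3]; simp [ha]
  -- abs of differences of roots
  have hd32 : ‖lam3 ρ - lam2 ρ‖ = Real.sqrt 3 * ρ := by
    have : lam3 ρ - lam2 ρ = ((-(Real.sqrt 3 * ρ):ℝ):ℂ) + ((0:ℝ):ℂ) * Complex.I := by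
      rw [hl2, hl3]; push_cast; ring
    rw [this, Complex.norm_add_mul_I]
    rw [show (-(Real.sqrt 3 * ρ))^2 + (0:ℝ)^2 = (Real.sqrt 3 * ρ)^2 by ring]
    exact Real.sqrt_sq (by positivity)
  have hd13 : ‖lam1 ρ - lam3 ρ‖ = Real.sqrt 3 * ρ := by
    have : lam1 ρ - lam3 ρ = ((Real.sqrt 3/2 * ρ:ℝ):ℂ) + ((3/2*ρ:ℝ):ℂ) * Complex.I := by
      rw [hl1, hl3]; push_cast; ring
    rw [this, Complex.norm_add_mul_I]
    rw [show (Real.sqrt 3/2 * ρ)^2 + (3/2*ρ)^2 = 3 * ρ^2 by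
      nlinarith [Real.sq_sqrt (by norm_num : (3:ℝ) ≥ 0)]]
    rw [show (3:ℝ) * ρ^2 = (Real.sqrt 3 * ρ)^2 by
      nlinarith [Real.sq_sqrt (by norm_num : (3:ℝ) ≥ 0)]]
    exact Real.sqrt_sq (by positivity)
  have hd21 : ‖lam2 ρ - lam1 ρ‖ = Real.sqrt 3 * ρ := by
    have : lam2 ρ - lam1 ρ = ((Real.sqrt 3/2 * ρ:ℝ):ℂ) + ((-(3/2*ρ):ℝ):ℂ) * Complex.I := by
      rw [hl1, hl2]; push_cast; ring
    rw [this, Complex.norm_add_mul_I]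
    rw [show (Real.sqrt 3/2 * ρ)^2 + (-(3/2*ρ))^2 = (Real.sqrt 3 * ρ)^2 by
      nlinarith [Real.sq_sqrt (by norm_num : (3:ℝ) ≥ 0)]]
    exact Real.sqrt_sq (by positivity)
  -- numerator bound
  have hnum : ‖Complex.exp (lam3 ρ) - Complex.exp (lam2 ρ)‖ ≤ 2 * Real.exp a := by
    calc ‖Complex.exp (lam3 ρ) - Complex.exp (lam2 ρ)‖
        ≤ ‖Complex.exp (lam3 ρ)‖ + ‖Complex.exp (lam2 ρ)‖ := by
          simpa using norm_sub_le (Complex.exp (lam3 ρ)) (Complex.exp (lam2 ρ))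
      _ = Real.exp (-a) + Real.exp a := by rw [e2, e3]
      _ ≤ 2 * Real.exp a := by linarith
  -- denominator lower bound
  have habsT3 : ‖(lam2 ρ - lam1 ρ) * Complex.exp (-lam3 ρ)‖ = Real.sqrt 3 * ρ * Real.exp a := by
    rw [norm_mul, hd21, e3']
  have habsT1 : ‖(lam3 ρ - lam2 ρ) * Complex.exp (-lam1 ρ)‖ = Real.sqrt 3 * ρ := by
    rw [norm_mul, hd32, e1', mul_one]
  have habsT2 : ‖(lam1 ρ - lam3 ρ) * Complex.exp (-lam2 ρ)‖ = Real.sqrt 3 * ρ * Real.exp (-a) := by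
    rw [norm_mul, hd13, e2']
  have hden : Real.sqrt 3 * ρ * Real.exp a / 2 ≤ ‖Delta1 ρ‖ := by
    have key : ‖(lam2 ρ - lam1 ρ) * Complex.exp (-lam3 ρ)‖ ≤
        ‖Delta1 ρ‖ +
        ‖(lam3 ρ - lam2 ρ) * Complex.exp (-lam1 ρ)‖ +
        ‖(lam1 ρ - lam3 ρ) * Complex.exp (-lam2 ρ)‖ := by
      have : (lam2 ρ - lam1 ρ) * Complex.exp (-lam3 ρ) =
          Delta1 ρ + (-((lam3 ρ - lam2 ρ) * Complex.exp (-lam1 ρ))) +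
          (-((lam1 ρ - lam3 ρ) * Complex.exp (-lam2 ρ))) := by
        simp [Delta1]; ring
      rw [this]
      calc ‖_‖ ≤ ‖Delta1 ρ + (-((lam3 ρ - lam2 ρ) * Complex.exp (-lam1 ρ)))‖ +
            ‖-((lam1 ρ - lam3 ρ) * Complex.exp (-lam2 ρ))‖ := norm_add_le _ _
        _ ≤ _ := by
            simp only [norm_neg]
            have := norm_add_le (Delta1 ρ) (-((lam3 ρ - lam2 ρ) * Complex.exp (-lam1 ρ)))
            simp only [norm_neg] at this
            linarith
    rw [habsT3, habsT1, habsT2] at key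
    have hs0 : (0:ℝ) < Real.sqrt 3 * ρ := by positivity
    nlinarith [Real.exp_pos (-a)]
  -- conclude
  have hden0 : (0:ℝ) < ‖Delta1 ρ‖ := lt_of_lt_of_le (by positivity) hden
  rw [norm_div]
  have h1 : ‖Complex.exp (lam3 ρ) - Complex.exp (lam2 ρ)‖ / ‖Delta1 ρ‖
      ≤ (2 * Real.exp a) / (Real.sqrt 3 * ρ * Real.exp a / 2) :=
    div_le_div₀ (by positivity) hnum (by positivity) hden
  refine h1.trans ?_
  rw [show (2 * Real.exp a) / (Real.sqrt 3 * ρ * Real.exp a / 2) = 4 / (Real.sqrt 3 * ρ) by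
    field_simp; ring]
  rw [← sub_nonneg]
  have : 3 * ρ⁻¹ - 4 / (Real.sqrt 3 * ρ) = (3 * Real.sqrt 3 - 4) / (Real.sqrt 3 * ρ) := by
    field_simp
  rw [this]
  apply div_nonneg (by nlinarith) (by positivity)
end
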